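/- Let π be a possibility distribution on ℝⁿ satisfying Assumption 1 and let ℓ be a positive integer. Then the discrete ambiguity set P_π^ℓ is nonempty (it contains the Dirac measure at the nominal scenario â), convex, and compact in the topology of weak convergence of Borel probability measures on the compact set C(0). Moreover, P_π ⊆ P_π^ℓ, where P_π = {P Borel probability measure on C(0) : P(C(λ)) ≥ 1 − λ for all λ ∈ [0,1]}. -/

import Mathlib

open MeasureTheory Set

open Filter Topology TopologicalSpace
open scoped ENNReal NNReal

/-- Mini-Prokhorov: a sequence of probability measures on `ℝⁿ` that all give full mass to a
fixed compact set has a weakly convergent subsequence. -/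
lemma prokhorov_subseq {n : ℕ} {K : Set (Fin n → ℝ)} (hK : IsCompact K)
    (P : ℕ → ProbabilityMeasure (Fin n → ℝ))
    (hP : ∀ k, (P k : Measure (Fin n → ℝ)) K = 1) :
    ∃ (Q : ProbabilityMeasure (Fin n → ℝ)) (φ : ℕ → ℕ), StrictMono φ ∧
      Tendsto (fun k => P (φ k)) atTop (𝓝 Q) := by
  classical
  obtain ⟨b, b_count, -, b_basis⟩ := TopologicalSpace.exists_countable_basis (Fin n → ℝ)
  have b_nonempty : b.Nonempty := by
    rcases b_basis.exists_subset_of_mem_open (mem_univ (0 : Fin n → ℝ)) isOpen_univ with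
      ⟨U, hU, -, -⟩
    exact ⟨U, hU⟩
  obtain ⟨e, he⟩ := b_count.exists_eq_range b_nonempty
  have e_open : ∀ j, IsOpen (e j) := fun j => b_basis.isOpen (by rw [he]; exact mem_range_self j)
  set V : Finset ℕ → Set (Fin n → ℝ) := fun s => ⋃ j ∈ s, e j with hVdef
  have V_open : ∀ s, IsOpen (V s) := fun s => isOpen_biUnion fun j _ => e_open j
  have V_union : ∀ s t, V (s ∪ t) = V s ∪ V t := fun s t => by
    simp only [hVdef, Finset.set_biUnion_union]
  -- covering lemma
  have cover : ∀ (T G : Set (Fin n → ℝ)), IsCompact T → IsOpen G → T ⊆ G →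
      ∃ s : Finset ℕ, T ⊆ V s ∧ V s ⊆ G := by
    intro T G hT hG hTG
    have hx : ∀ x ∈ T, ∃ j : ℕ, e j ⊆ G ∧ x ∈ e j := by
      intro x hxT
      rcases b_basis.exists_subset_of_mem_open (hTG hxT) hG with ⟨U, hUb, hxU, hUG⟩
      rw [he] at hUb
      rcases hUb with ⟨j, rfl⟩
      exact ⟨j, hUG, hxU⟩
    choose! j hj1 hj2 using hx
    have hcov : T ⊆ ⋃ i : { k : ℕ // e k ⊆ G }, e i :=
      fun x hxT => mem_iUnion.2 ⟨⟨j x, hj1 x hxT⟩, hj2 x hxT⟩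
    obtain ⟨t, ht⟩ := hT.elim_finite_subcover (fun i : { k : ℕ // e k ⊆ G } => e i)
      (fun i => e_open i) hcov
    refine ⟨t.image Subtype.val, ?_, ?_⟩
    · intro x hxT
      rcases mem_iUnion₂.1 (ht hxT) with ⟨i, hi, hxi⟩
      exact mem_iUnion₂.2 ⟨i.1, Finset.mem_image_of_mem _ hi, hxi⟩
    · refine iUnion₂_subset fun k hk => ?_
      rcases Finset.mem_image.1 hk with ⟨i, -, rfl⟩
      exact i.2
  -- diagonal extraction
  have hseq : IsSeqCompact (Set.univ : Set (Finset ℕ → ℝ≥0∞)) := isCompact_univ.isSeqCompact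
  obtain ⟨a, -, φ, φmono, hφ⟩ :=
    hseq (x := fun k s => (P k : Measure (Fin n → ℝ)) (V s)) fun k => mem_univ _
  set Q' : ℕ → ProbabilityMeasure (Fin n → ℝ) := fun k => P (φ k) with hQ'def
  have ha : ∀ s, Tendsto (fun k => (Q' k : Measure (Fin n → ℝ)) (V s)) atTop (𝓝 (a s)) := by
    rw [tendsto_pi_nhds] at hφ
    exact fun s => hφ s
  have a_le_one : ∀ s, a s ≤ 1 :=
    fun s => le_of_tendsto (ha s) (Eventually.of_forall fun k => prob_le_one)
  have a_mono : ∀ s t, V s ⊆ V t → a s ≤ a t := fun s t hst =>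
    le_of_tendsto_of_tendsto' (ha s) (ha t) fun k => measure_mono hst
  have a_ge_one : ∀ s, K ⊆ V s → (1 : ℝ≥0∞) ≤ a s := fun s hs =>
    ge_of_tendsto (ha s) (Eventually.of_forall fun k => by
      rw [← hP (φ k)]; exact measure_mono hs)
  have a_add : ∀ s t, Disjoint (V s) (V t) → a s + a t ≤ a (s ∪ t) := by
    intro s t hdisj
    refine le_of_tendsto_of_tendsto' (((ha s).add (ha t))) (ha (s ∪ t)) fun k => ?_
    rw [V_union, measure_union hdisj (V_open t).measurableSet]
  have a_subadd : ∀ s t, a (s ∪ t) ≤ a s + a t := by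
    intro s t
    refine le_of_tendsto_of_tendsto' (ha (s ∪ t)) ((ha s).add (ha t)) fun k => ?_
    rw [V_union]; exact measure_union_le _ _
  -- the set function on arbitrary sets
  set A : Set (Fin n → ℝ) → ℝ≥0∞ := fun T => ⨅ (s : Finset ℕ) (_ : T ⊆ V s), a s with hAdef
  have A_le : ∀ T s, T ⊆ V s → A T ≤ a s := fun T s h => iInf₂_le s h
  have le_A : ∀ T (c : ℝ≥0∞), (∀ s, T ⊆ V s → c ≤ a s) → c ≤ A T := fun T c h => le_iInf₂ h
  have A_le_one : ∀ T : Set (Fin n → ℝ), IsCompact T → A T ≤ 1 := by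
    intro T hT
    obtain ⟨s, hTs, -⟩ := cover T univ hT isOpen_univ (subset_univ T)
    exact (A_le T s hTs).trans (a_le_one s)
  have A_ne_top : ∀ T : Set (Fin n → ℝ), IsCompact T → A T ≠ ∞ := fun T hT =>
    ((A_le_one T hT).trans_lt ENNReal.one_lt_top).ne
  have A_mono : ∀ T₁ T₂ : Set (Fin n → ℝ), T₁ ⊆ T₂ → A T₁ ≤ A T₂ := fun T₁ T₂ h =>
    le_A T₂ (A T₁) fun s hs => A_le T₁ s (h.trans hs)
  have A_exists_lt : ∀ (T : Set (Fin n → ℝ)), IsCompact T → ∀ ε : ℝ≥0∞, ε ≠ 0 →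
      ∃ s, T ⊆ V s ∧ a s < A T + ε := by
    intro T hT ε hε
    have h : (⨅ (s : Finset ℕ) (_ : T ⊆ V s), a s) < A T + ε :=
      ENNReal.lt_add_right (A_ne_top T hT) hε
    rw [iInf_lt_iff] at h
    obtain ⟨s, hs⟩ := h
    rw [iInf_lt_iff] at hs
    obtain ⟨hTs, hlt⟩ := hs
    exact ⟨s, hTs, hlt⟩
  have A_sup_le : ∀ T₁ T₂ : Set (Fin n → ℝ), IsCompact T₁ → IsCompact T₂ →
      A (T₁ ∪ T₂) ≤ A T₁ + A T₂ := by
    intro T₁ T₂ h₁ h₂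
    refine ENNReal.le_of_forall_pos_le_add fun ε hε _ => ?_
    have hε2 : ((ε : ℝ≥0∞) / 2) ≠ 0 := by
      simp [ENNReal.div_eq_zero_iff, hε.ne']
    obtain ⟨s₁, hs₁, hlt₁⟩ := A_exists_lt T₁ h₁ (ε / 2) hε2
    obtain ⟨s₂, hs₂, hlt₂⟩ := A_exists_lt T₂ h₂ (ε / 2) hε2
    have hsub : T₁ ∪ T₂ ⊆ V (s₁ ∪ s₂) := by
      rw [V_union]; exact union_subset_union hs₁ hs₂
    calc A (T₁ ∪ T₂) ≤ a (s₁ ∪ s₂) := A_le _ _ hsub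
      _ ≤ a s₁ + a s₂ := a_subadd _ _
      _ ≤ (A T₁ + ε / 2) + (A T₂ + ε / 2) := add_le_add hlt₁.le hlt₂.le
      _ = A T₁ + A T₂ + ε := by
          rw [add_add_add_comm, ENNReal.add_halves]
  have A_sup_disjoint : ∀ T₁ T₂ : Set (Fin n → ℝ), IsCompact T₁ → IsCompact T₂ →
      Disjoint T₁ T₂ → A T₁ + A T₂ ≤ A (T₁ ∪ T₂) := by
    intro T₁ T₂ h₁ h₂ hd
    obtain ⟨W₁, W₂, hW₁, hW₂, hsub₁, hsub₂, hWd⟩ := SeparatedNhds.of_isCompact_isCompact h₁ h₂ hd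
    refine le_A _ _ fun s hs => ?_
    obtain ⟨s₁, hTs₁, hs₁sub⟩ := cover T₁ (V s ∩ W₁) h₁ ((V_open s).inter hW₁)
      (subset_inter (subset_union_left.trans hs) hsub₁)
    obtain ⟨s₂, hTs₂, hs₂sub⟩ := cover T₂ (V s ∩ W₂) h₂ ((V_open s).inter hW₂)
      (subset_inter (subset_union_right.trans hs) hsub₂)
    calc A T₁ + A T₂ ≤ a s₁ + a s₂ := add_le_add (A_le _ _ hTs₁) (A_le _ _ hTs₂)
      _ ≤ a (s₁ ∪ s₂) := a_add _ _
          (hWd.mono (hs₁sub.trans inter_subset_right) (hs₂sub.trans inter_subset_right))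
      _ ≤ a s := a_mono _ _ (by
          rw [V_union]
          exact union_subset (hs₁sub.trans inter_subset_left) (hs₂sub.trans inter_subset_left))
  set μC : Content (Fin n → ℝ) :=
    { toFun := fun T => (A ↑T).toNNReal
      mono' := fun K₁ K₂ h => ENNReal.toNNReal_mono (A_ne_top _ K₂.2) (A_mono _ _ h)
      sup_disjoint' := by
        intro K₁ K₂ hd _ _
        have heq : A (↑K₁ ∪ ↑K₂) = A ↑K₁ + A ↑K₂ :=
          le_antisymm (A_sup_le _ _ K₁.2 K₂.2) (A_sup_disjoint _ _ K₁.2 K₂.2 hd)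
        show (A ↑(K₁ ⊔ K₂)).toNNReal = (A ↑K₁).toNNReal + (A ↑K₂).toNNReal
        rw [Compacts.coe_sup, heq]
        exact ENNReal.toNNReal_add (A_ne_top (↑K₁) K₁.2) (A_ne_top (↑K₂) K₂.2)
      sup_le' := by
        intro K₁ K₂
        show (A ↑(K₁ ⊔ K₂)).toNNReal ≤ (A ↑K₁).toNNReal + (A ↑K₂).toNNReal
        calc (A ↑(K₁ ⊔ K₂)).toNNReal
            ≤ (A ↑K₁ + A ↑K₂).toNNReal := by
              refine ENNReal.toNNReal_mono
                (ENNReal.add_ne_top.2 ⟨A_ne_top (↑K₁) K₁.2, A_ne_top (↑K₂) K₂.2⟩) ?_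
              rw [Compacts.coe_sup]
              exact A_sup_le _ _ K₁.2 K₂.2
          _ = (A ↑K₁).toNNReal + (A ↑K₂).toNNReal :=
              ENNReal.toNNReal_add (A_ne_top (↑K₁) K₁.2) (A_ne_top (↑K₂) K₂.2) } with hμCdef
  have hμCK : ∀ T : Compacts (Fin n → ℝ), (μC T : ℝ≥0∞) = A ↑T := fun T =>
    ENNReal.coe_toNNReal (A_ne_top _ T.2)
  have hν_open : ∀ (U : Set (Fin n → ℝ)) (hU : IsOpen U),
      μC.measure U = μC.innerContent ⟨U, hU⟩ := by
    intro U hU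
    rw [Content.measure_apply _ hU.measurableSet]
    exact μC.outerMeasure_opens ⟨U, hU⟩
  have h_univ_le : μC.measure univ ≤ 1 := by
    rw [hν_open univ isOpen_univ]
    unfold Content.innerContent
    refine iSup₂_le fun T _ => ?_
    rw [hμCK]
    exact A_le_one _ T.2
  have h_univ_ge : (1 : ℝ≥0∞) ≤ μC.measure univ := by
    rw [hν_open univ isOpen_univ]
    refine le_trans ?_ (μC.le_innerContent ⟨K, hK⟩ ⟨univ, isOpen_univ⟩ (subset_univ K))
    rw [hμCK]
    exact le_A _ _ fun s hs => a_ge_one s hs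
  have hprob : IsProbabilityMeasure μC.measure := ⟨le_antisymm h_univ_le h_univ_ge⟩
  refine ⟨⟨μC.measure, hprob⟩, φ, φmono, ?_⟩
  have key : ∀ G : Set (Fin n → ℝ), IsOpen G →
      μC.measure G ≤ atTop.liminf fun k => (Q' k : Measure (Fin n → ℝ)) G := by
    intro G hG
    rw [hν_open G hG]
    unfold Content.innerContent
    refine iSup₂_le fun T hTG => ?_
    obtain ⟨s, hTs, hsG⟩ := cover ↑T G T.2 hG hTG
    rw [hμCK]
    refine (A_le _ _ hTs).trans ?_
    rw [← (ha s).liminf_eq]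
    exact liminf_le_liminf (Eventually.of_forall fun k => measure_mono hsG)
  apply MeasureTheory.tendsto_of_forall_isOpen_le_liminf
  intro G hG
  have aux : (ENNReal.ofNNReal (atTop.liminf fun k => Q' k G)) =
      atTop.liminf fun k => ((Q' k G : ℝ≥0) : ℝ≥0∞) := by
    refine Monotone.map_liminf_of_continuousAt (F := atTop) ENNReal.coe_mono (fun k => Q' k G)
      ENNReal.continuous_coe.continuousAt ?_ ?_
    · exact IsBoundedUnder.isCoboundedUnder_ge ⟨1, by simp⟩
    · exact ⟨0, by simp⟩
  rw [← ENNReal.coe_le_coe, aux]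
  simp only [ProbabilityMeasure.ennreal_coeFn_eq_coeFn_toMeasure]
  exact (ProbabilityMeasure.ennreal_coeFn_eq_coeFn_toMeasure _ G).trans_le (key G hG)

/-- The discrete ambiguity set `P_π^ℓ`. -/
def ambiguitySet (n ℓ : ℕ) (C : ℝ → Set (Fin n → ℝ)) : Set (Measure (Fin n → ℝ)) :=
  {P | IsProbabilityMeasure P ∧
    ∀ i : Fin (ℓ + 1), ENNReal.ofReal (1 - ((i : ℕ) : ℝ) / ℓ) ≤ P (C (((i : ℕ) : ℝ) / ℓ))}

/-- For a possibility distribution satisfying Assumption 1, the discrete ambiguity set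
`P_π^ℓ` is nonempty (containing the Dirac measure at the nominal scenario `â`), convex,
compact in the topology of weak convergence of probability measures, and contains the
continuous ambiguity set `P_π`. -/
theorem ambiguitySet_nonempty_convex_compact (n ℓ : ℕ) (hn : 1 ≤ n) (hℓ : 1 ≤ ℓ)
    (π : (Fin n → ℝ) → ℝ) (hrange : ∀ a, π a ∈ Icc (0 : ℝ) 1)
    (C : ℝ → Set (Fin n → ℝ))
    (hcut : ∀ lam : ℝ, 0 < lam → C lam = {a | lam ≤ π a})
    (hsupp : C 0 = closure {a | 0 < π a})
    (ahat : Fin n → ℝ) (hnorm : π ahat = 1)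
    (hcont : ContinuousOn π (C 0))
    (hcompact : IsCompact (C 0))
    (hclosed : ∀ lam ∈ Icc (0 : ℝ) 1, IsClosed (C lam))
    (hconvex : ∀ lam ∈ Icc (0 : ℝ) 1, Convex ℝ (C lam))
    (hint : ∀ lam ∈ Ico (0 : ℝ) 1, (interior (C lam)).Nonempty) :
    Measure.dirac ahat ∈ ambiguitySet n ℓ C ∧
    (∀ P ∈ ambiguitySet n ℓ C, ∀ Q ∈ ambiguitySet n ℓ C, ∀ s t : ENNReal,
      s + t = 1 → s • P + t • Q ∈ ambiguitySet n ℓ C) ∧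
    IsCompact {P : ProbabilityMeasure (Fin n → ℝ) |
      (P : Measure (Fin n → ℝ)) ∈ ambiguitySet n ℓ C} ∧
    {P : Measure (Fin n → ℝ) | IsProbabilityMeasure P ∧
        ∀ lam ∈ Icc (0 : ℝ) 1, ENNReal.ofReal (1 - lam) ≤ P (C lam)}
      ⊆ ambiguitySet n ℓ C := by
  have hℓpos : (0 : ℝ) < ℓ := by exact_mod_cast hℓ
  have hlam_mem : ∀ i : Fin (ℓ + 1), ((i : ℕ) : ℝ) / ℓ ∈ Icc (0 : ℝ) 1 := by
    intro i
    refine ⟨by positivity, ?_⟩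
    rw [div_le_one hℓpos]
    exact_mod_cast Fin.is_le i
  refine ⟨?_, ?_, ?_, ?_⟩
  · -- dirac at ahat
    refine ⟨inferInstance, fun i => ?_⟩
    have hmem : ahat ∈ C (((i : ℕ) : ℝ) / ℓ) := by
      rcases Nat.eq_zero_or_pos (i : ℕ) with h0 | hpos
      · rw [h0]
        simp only [Nat.cast_zero, zero_div]
        rw [hsupp]
        exact subset_closure (by simp [hnorm])
      · have hlampos : 0 < ((i : ℕ) : ℝ) / ℓ := by positivity
        rw [hcut _ hlampos]
        show ((i : ℕ) : ℝ) / ℓ ≤ π ahat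
        rw [hnorm]
        exact (hlam_mem i).2
    rw [Measure.dirac_apply_of_mem hmem]
    exact ENNReal.ofReal_le_one.mpr (by linarith [(hlam_mem i).1])
  · -- convexity
    intro P hP Q hQ s t hst
    haveI := hP.1
    haveI := hQ.1
    refine ⟨⟨?_⟩, fun i => ?_⟩
    · rw [Measure.add_apply, Measure.smul_apply, Measure.smul_apply, measure_univ, measure_univ,
        smul_eq_mul, smul_eq_mul, mul_one, mul_one, hst]
    · calc ENNReal.ofReal (1 - ((i : ℕ) : ℝ) / ℓ)
          = (s + t) * ENNReal.ofReal (1 - ((i : ℕ) : ℝ) / ℓ) := by rw [hst, one_mul]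
        _ = s * ENNReal.ofReal (1 - ((i : ℕ) : ℝ) / ℓ)
            + t * ENNReal.ofReal (1 - ((i : ℕ) : ℝ) / ℓ) := add_mul _ _ _
        _ ≤ s * P (C (((i : ℕ) : ℝ) / ℓ)) + t * Q (C (((i : ℕ) : ℝ) / ℓ)) :=
            add_le_add (mul_le_mul_right (hP.2 i) s) (mul_le_mul_right (hQ.2 i) t)
        _ = (s • P + t • Q) (C (((i : ℕ) : ℝ) / ℓ)) := by
            rw [Measure.add_apply, Measure.smul_apply, Measure.smul_apply, smul_eq_mul,
              smul_eq_mul]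
  · -- compactness
    have hseqS : IsSeqCompact {P : ProbabilityMeasure (Fin n → ℝ) |
        (P : Measure (Fin n → ℝ)) ∈ ambiguitySet n ℓ C} := by
      intro P hPmem
      have hPK : ∀ k, (P k : Measure (Fin n → ℝ)) (C 0) = 1 := by
        intro k
        have h0 := (hPmem k).2 0
        simp only [Fin.val_zero, Nat.cast_zero, zero_div, sub_zero, ENNReal.ofReal_one] at h0
        exact le_antisymm prob_le_one h0
      obtain ⟨Q, φ, hφ, hconv⟩ := prokhorov_subseq hcompact P hPK
      refine ⟨Q, ⟨inferInstance, fun i => ?_⟩, φ, hφ, hconv⟩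
      have hcl : IsClosed (C (((i : ℕ) : ℝ) / ℓ)) := hclosed _ (hlam_mem i)
      have hls := ProbabilityMeasure.limsup_measure_closed_le_of_tendsto hconv hcl
      refine le_trans ?_ hls
      refine Filter.le_limsup_of_frequently_le
        (Frequently.of_forall fun k => (hPmem (φ k)).2 i) ?_
      exact Filter.isBoundedUnder_of ⟨1, fun k => prob_le_one⟩
    letI : MetricSpace (ProbabilityMeasure (Fin n → ℝ)) :=
      TopologicalSpace.metrizableSpaceMetric _
    exact hseqS.isCompact
  · -- inclusion of the continuous ambiguity set
    intro P hP
    exact ⟨hP.1, fun i => hP.2 _ (hlam_mem i)⟩
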